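/- Let P ∈ ℝ^{n×n} be an orthogonal projection matrix with σ = diag(P), Σ = diag(σ), Λ = Σ − P∘P, and let τ ∈ ℝ^n_{>0} with τ_i ≥ σ_i for all i, T = diag(τ). Then for all y ∈ ℝ^n and β ∈ [0, 1/2]: ‖(T^{-1}Λ − βI)y‖_∞ ≤ (1−β)‖y‖_∞ + min{‖y‖_∞, ‖y‖_τ} and ‖T^{1/2}(T^{-1}Λ − βI)T^{-1/2}‖₂ ≤ 1 − β, where ‖y‖_τ² = Σ_i τ_i y_i². -/

import Mathlib

open Matrix

namespace Stmt10Aux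

variable {n : ℕ} {P : Matrix (Fin n) (Fin n) ℝ}

lemma diag_eq (hsym : P.IsSymm) (hproj : P * P = P) (i : Fin n) :
    P i i = ∑ j, (P i j) ^ 2 := by
  conv_lhs => rw [← hproj]
  rw [Matrix.mul_apply]
  exact Finset.sum_congr rfl fun j _ => by rw [hsym.apply, sq]

lemma entry_eq (hsym : P.IsSymm) (hproj : P * P = P) (i j : Fin n) :
    P i j = ∑ k, P i k * P j k := by
  conv_lhs => rw [← hproj]
  rw [Matrix.mul_apply]
  exact Finset.sum_congr rfl fun k _ => by rw [hsym.apply k j]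

lemma diag_nonneg (hsym : P.IsSymm) (hproj : P * P = P) (i : Fin n) : 0 ≤ P i i := by
  rw [diag_eq hsym hproj]
  exact Finset.sum_nonneg fun j _ => sq_nonneg _

lemma entry_sq_le (hsym : P.IsSymm) (hproj : P * P = P) (i j : Fin n) :
    (P i j) ^ 2 ≤ P i i * P j j := by
  rw [entry_eq hsym hproj i j, diag_eq hsym hproj i, diag_eq hsym hproj j]
  exact Finset.sum_mul_sq_le_sq_mul_sq Finset.univ _ _

lemma posSemidef (hsym : P.IsSymm) (hproj : P * P = P) : P.PosSemidef := by
  have h : P = Pᴴ * P := by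
    rw [show Pᴴ = P from ?_, hproj]
    · rw [conjTranspose]
      ext i j
      simp [hsym.apply i j]
  rw [h]
  exact Matrix.posSemidef_conjTranspose_mul_self P

lemma schur_nonneg (hsym : P.IsSymm) (hproj : P * P = P) (z : Fin n → ℝ) :
    0 ≤ ∑ i, ∑ j, (P i j) ^ 2 * (z i * z j) := by
  have hP := posSemidef hsym hproj
  have h1 : ∀ w : Fin n → ℝ, 0 ≤ ∑ i, w i * ∑ j, P i j * w j := by
    intro w
    simpa [dotProduct, Matrix.mulVec, star_trivial] using hP.dotProduct_mulVec_nonneg w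
  calc (0:ℝ) ≤ ∑ k, ∑ i, (z i * P i k) * ∑ j, P i j * (z j * P j k) :=
        Finset.sum_nonneg fun k _ => h1 _
    _ = ∑ i, ∑ j, (P i j) ^ 2 * (z i * z j) := by
        simp only [Finset.mul_sum]
        rw [Finset.sum_comm]
        refine Finset.sum_congr rfl fun i _ => ?_
        rw [Finset.sum_comm]
        refine Finset.sum_congr rfl fun j _ => ?_
        rw [show (P i j) ^ 2 * (z i * z j)
            = (∑ k, P i k * P j k) * (P i j * (z i * z j)) from by
          rw [← entry_eq hsym hproj]; ring]
        rw [Finset.sum_mul]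
        exact Finset.sum_congr rfl fun k _ => by ring

lemma quadLam (P : Matrix (Fin n) (Fin n) ℝ) (z : Fin n → ℝ) :
    z ⬝ᵥ ((Matrix.diagonal (fun i => P i i) - Matrix.of fun i j => (P i j) ^ 2) *ᵥ z)
      = ∑ i, P i i * z i ^ 2 - ∑ i, ∑ j, (P i j) ^ 2 * (z i * z j) := by
  rw [Matrix.sub_mulVec, dotProduct_sub]
  congr 1
  · simp only [dotProduct, Matrix.mulVec_diagonal]
    exact Finset.sum_congr rfl fun i _ => by ring
  · simp only [dotProduct, Matrix.mulVec, Matrix.of_apply, Finset.mul_sum]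
    exact Finset.sum_congr rfl fun i _ => Finset.sum_congr rfl fun j _ => by ring

lemma half_identity (hsym : P.IsSymm) (hproj : P * P = P) (z : Fin n → ℝ) :
    ∑ i, ∑ j, (P i j) ^ 2 * (z i - z j) ^ 2
      = 2 * (∑ i, P i i * z i ^ 2 - ∑ i, ∑ j, (P i j) ^ 2 * (z i * z j)) := by
  have e1 : ∀ i j : Fin n, (P i j) ^ 2 * (z i - z j) ^ 2
      = (P i j) ^ 2 * z i ^ 2 + (P i j) ^ 2 * z j ^ 2 - 2 * ((P i j) ^ 2 * (z i * z j)) := by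
    intro i j; ring
  simp only [e1, Finset.sum_sub_distrib, Finset.sum_add_distrib, ← Finset.mul_sum]
  have e2 : ∑ i, ∑ j, (P i j) ^ 2 * z i ^ 2 = ∑ i, P i i * z i ^ 2 := by
    refine Finset.sum_congr rfl fun i _ => ?_
    rw [← Finset.sum_mul, ← diag_eq hsym hproj]
  have e3 : ∑ i, ∑ j, (P i j) ^ 2 * z j ^ 2 = ∑ i, P i i * z i ^ 2 := by
    rw [Finset.sum_comm]
    refine Finset.sum_congr rfl fun j _ => ?_
    rw [← Finset.sum_mul]
    congr 1
    rw [diag_eq hsym hproj j]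
    exact Finset.sum_congr rfl fun i _ => by rw [hsym.apply]
  rw [e2, e3]; ring

lemma lam_posSemidef (hsym : P.IsSymm) (hproj : P * P = P) :
    (Matrix.diagonal (fun i => P i i) - Matrix.of fun i j => (P i j) ^ 2).PosSemidef := by
  refine Matrix.PosSemidef.of_dotProduct_mulVec_nonneg ?_ ?_
  · show _ = _
    ext i j
    simp only [Matrix.conjTranspose_apply, Matrix.sub_apply, Matrix.diagonal_apply,
      Matrix.of_apply, star_trivial]
    rw [hsym.apply i j]
    by_cases h : i = j <;> simp [h, eq_comm]
  · intro z
    have h1 := half_identity hsym hproj z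
    have h2 : 0 ≤ ∑ i, ∑ j, (P i j) ^ 2 * (z i - z j) ^ 2 :=
      Finset.sum_nonneg fun i _ => Finset.sum_nonneg fun j _ =>
        mul_nonneg (sq_nonneg _) (sq_nonneg _)
    have h3 := quadLam P z
    simp only [star_trivial]
    rw [h3]
    linarith

open scoped MatrixOrder in
lemma sqrt_exists {A : Matrix (Fin n) (Fin n) ℝ} (hA : A.PosSemidef) :
    ∃ S : Matrix (Fin n) (Fin n) ℝ, S * S = A ∧ Sᴴ = S :=
  ⟨CFC.sqrt A, CFC.sqrt_mul_sqrt_self A hA.nonneg, (CFC.sqrt_nonneg A).posSemidef.1⟩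

end Stmt10Aux

open Stmt10Aux

set_option maxHeartbeats 1000000 in
/-- Bounds on `T⁻¹Λ − βI` for `Λ = Σ − P∘P`, in the sup norm and in the `τ`-conjugated
spectral norm (stated as an ℓ₂ operator bound). -/
theorem stmt10 (n : ℕ) (P : Matrix (Fin n) (Fin n) ℝ) (hsym : P.IsSymm) (hproj : P * P = P)
    (τ : Fin n → ℝ) (hτpos : ∀ i, 0 < τ i) (hτ : ∀ i, P i i ≤ τ i)
    (β : ℝ) (hβ0 : 0 ≤ β) (hβ : β ≤ 1/2) :
    (∀ y : Fin n → ℝ,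
      ‖(Matrix.diagonal (fun i => (τ i)⁻¹) *
          (Matrix.diagonal (fun i => P i i) - Matrix.of fun i j => (P i j) ^ 2) -
          β • (1 : Matrix (Fin n) (Fin n) ℝ)) *ᵥ y‖ ≤
        (1 - β) * ‖y‖ + min ‖y‖ (Real.sqrt (∑ i, τ i * y i ^ 2))) ∧
    (∀ y : Fin n → ℝ,
      Real.sqrt (∑ i,
          (((Matrix.diagonal (fun i => Real.sqrt (τ i)) *
              (Matrix.diagonal (fun i => (τ i)⁻¹) *
                (Matrix.diagonal (fun i => P i i) - Matrix.of fun i j => (P i j) ^ 2) -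
                β • (1 : Matrix (Fin n) (Fin n) ℝ)) *
              Matrix.diagonal (fun i => (Real.sqrt (τ i))⁻¹)) *ᵥ y) i) ^ 2) ≤
        (1 - β) * Real.sqrt (∑ i, y i ^ 2)) := by
  have hτ0 : ∀ i, τ i ≠ 0 := fun i => ne_of_gt (hτpos i)
  have hst0 : ∀ i, Real.sqrt (τ i) ≠ 0 := fun i => ne_of_gt (Real.sqrt_pos.mpr (hτpos i))
  set Λm : Matrix (Fin n) (Fin n) ℝ :=
    Matrix.diagonal (fun i => P i i) - Matrix.of fun i j => (P i j) ^ 2 with hΛm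
  constructor
  · -- Part 1 : sup-norm bound
    intro y
    set v := (Matrix.diagonal (fun i => (τ i)⁻¹) * Λm -
      β • (1 : Matrix (Fin n) (Fin n) ℝ)) *ᵥ y with hv
    have hvi : ∀ i, v i = ((τ i)⁻¹ * P i i - β) * y i - (τ i)⁻¹ * ∑ j, (P i j) ^ 2 * y j := by
      intro i
      rw [hv, Matrix.sub_mulVec, Matrix.smul_mulVec, Matrix.one_mulVec,
        ← Matrix.mulVec_mulVec, hΛm, Matrix.sub_mulVec]
      simp only [Pi.sub_apply, Pi.smul_apply, smul_eq_mul, Matrix.mulVec_diagonal]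
      simp only [Matrix.mulVec, dotProduct, Matrix.of_apply]
      ring
    have habs : ∀ i, |y i| ≤ ‖y‖ := fun i => by
      simpa [Real.norm_eq_abs] using norm_le_pi_norm y i
    have hN0 : (0:ℝ) ≤ ‖y‖ := norm_nonneg y
    have hS0 : (0:ℝ) ≤ Real.sqrt (∑ i, τ i * y i ^ 2) := Real.sqrt_nonneg _
    refine (pi_norm_le_iff_of_nonneg ?_).mpr ?_
    · exact add_nonneg (mul_nonneg (by linarith) hN0) (le_min hN0 hS0)
    intro i
    rw [Real.norm_eq_abs, hvi i]
    have t1 : |(τ i)⁻¹ * P i i - β| ≤ 1 - β := by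
      have h0 : 0 ≤ (τ i)⁻¹ * P i i :=
        mul_nonneg (inv_nonneg.mpr (hτpos i).le) (diag_nonneg hsym hproj i)
      have h1 : (τ i)⁻¹ * P i i ≤ 1 := by
        rw [inv_mul_le_iff₀ (hτpos i), mul_one]
        exact hτ i
      rw [abs_le]
      constructor <;> linarith
    have t2 : |∑ j, (P i j) ^ 2 * y j| ≤ P i i * ‖y‖ := by
      calc |∑ j, (P i j) ^ 2 * y j| ≤ ∑ j, |(P i j) ^ 2 * y j| :=
            Finset.abs_sum_le_sum_abs _ _
        _ ≤ ∑ j, (P i j) ^ 2 * ‖y‖ := Finset.sum_le_sum fun j _ => by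
            rw [abs_mul, abs_of_nonneg (sq_nonneg _)]
            exact mul_le_mul_of_nonneg_left (habs j) (sq_nonneg _)
        _ = P i i * ‖y‖ := by rw [← Finset.sum_mul, ← diag_eq hsym hproj]
    have t2a : (τ i)⁻¹ * |∑ j, (P i j) ^ 2 * y j| ≤ ‖y‖ := by
      calc (τ i)⁻¹ * |∑ j, (P i j) ^ 2 * y j| ≤ (τ i)⁻¹ * (τ i * ‖y‖) := by
            refine mul_le_mul_of_nonneg_left (t2.trans ?_) (inv_nonneg.mpr (hτpos i).le)
            exact mul_le_mul_of_nonneg_right (hτ i) hN0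
        _ = ‖y‖ := inv_mul_cancel_left₀ (hτ0 i) _
    have t2b : (τ i)⁻¹ * |∑ j, (P i j) ^ 2 * y j| ≤ Real.sqrt (∑ j, τ j * y j ^ 2) := by
      have hcs := Finset.sum_mul_sq_le_sq_mul_sq Finset.univ
        (fun j => (P i j) ^ 2 * (Real.sqrt (τ j))⁻¹) (fun j => Real.sqrt (τ j) * y j)
      have hfg : ∀ j : Fin n,
          ((P i j) ^ 2 * (Real.sqrt (τ j))⁻¹) * (Real.sqrt (τ j) * y j) = (P i j) ^ 2 * y j := by
        intro j
        rw [mul_assoc, inv_mul_cancel_left₀ (hst0 j)]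
      have hg2 : ∑ j, (Real.sqrt (τ j) * y j) ^ 2 = ∑ j, τ j * y j ^ 2 :=
        Finset.sum_congr rfl fun j _ => by
          rw [mul_pow, Real.sq_sqrt (hτpos j).le]
      have hf2 : ∑ j, ((P i j) ^ 2 * (Real.sqrt (τ j))⁻¹) ^ 2 ≤ τ i * P i i := by
        rw [show τ i * P i i = ∑ j, (P i j) ^ 2 * τ i from by
          rw [← Finset.sum_mul, ← diag_eq hsym hproj]; ring]
        refine Finset.sum_le_sum fun j _ => ?_
        rw [mul_pow, ← Real.sqrt_inv, Real.sq_sqrt (inv_nonneg.mpr (hτpos j).le)]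
        have h1 : (P i j) ^ 2 ≤ τ i * τ j := by
          refine (entry_sq_le hsym hproj i j).trans ?_
          exact mul_le_mul (hτ i) (hτ j) (diag_nonneg hsym hproj j) (hτpos i).le
        have h2 : ((P i j) ^ 2) ^ 2 ≤ (P i j) ^ 2 * (τ i * τ j) := by
          rw [pow_two ((P i j) ^ 2)]
          exact mul_le_mul_of_nonneg_left h1 (sq_nonneg _)
        calc ((P i j) ^ 2) ^ 2 * (τ j)⁻¹ ≤ ((P i j) ^ 2 * (τ i * τ j)) * (τ j)⁻¹ :=
              mul_le_mul_of_nonneg_right h2 (inv_nonneg.mpr (hτpos j).le)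
          _ = (P i j) ^ 2 * τ i * (τ j * (τ j)⁻¹) := by ring
          _ = (P i j) ^ 2 * τ i := by rw [mul_inv_cancel₀ (hτ0 j), mul_one]
      simp only [hfg, hg2] at hcs
      have hτP : τ i * P i i ≤ τ i ^ 2 := by
        rw [pow_two]
        exact mul_le_mul_of_nonneg_left (hτ i) (hτpos i).le
      have habs2 : |∑ j, (P i j) ^ 2 * y j| ≤ τ i * Real.sqrt (∑ j, τ j * y j ^ 2) := by
        rw [← Real.sqrt_sq_eq_abs]
        have : (∑ j, (P i j) ^ 2 * y j) ^ 2 ≤ τ i ^ 2 * ∑ j, τ j * y j ^ 2 := by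
          refine hcs.trans ?_
          refine mul_le_mul_of_nonneg_right (hf2.trans hτP) ?_
          exact Finset.sum_nonneg fun j _ => mul_nonneg (hτpos j).le (sq_nonneg _)
        refine (Real.sqrt_le_sqrt this).trans ?_
        rw [Real.sqrt_mul (sq_nonneg _), Real.sqrt_sq (hτpos i).le]
      calc (τ i)⁻¹ * |∑ j, (P i j) ^ 2 * y j|
          ≤ (τ i)⁻¹ * (τ i * Real.sqrt (∑ j, τ j * y j ^ 2)) :=
            mul_le_mul_of_nonneg_left habs2 (inv_nonneg.mpr (hτpos i).le)
        _ = Real.sqrt (∑ j, τ j * y j ^ 2) := inv_mul_cancel_left₀ (hτ0 i) _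
    have step : |((τ i)⁻¹ * P i i - β) * y i - (τ i)⁻¹ * ∑ j, (P i j) ^ 2 * y j|
        ≤ |((τ i)⁻¹ * P i i - β) * y i| + |(τ i)⁻¹ * ∑ j, (P i j) ^ 2 * y j| := by
      have := abs_add_le (((τ i)⁻¹ * P i i - β) * y i) (-((τ i)⁻¹ * ∑ j, (P i j) ^ 2 * y j))
      rw [abs_neg] at this
      rw [sub_eq_add_neg]
      exact this
    refine step.trans (add_le_add ?_ ?_)
    · rw [abs_mul]
      exact mul_le_mul t1 (habs i) (abs_nonneg _) (by linarith)
    · rw [abs_mul, abs_of_nonneg (inv_nonneg.mpr (hτpos i).le)]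
      exact le_min t2a t2b
  · -- Part 2 : spectral bound
    intro y
    set D : Matrix (Fin n) (Fin n) ℝ := Matrix.diagonal (fun i => (Real.sqrt (τ i))⁻¹) with hD
    have hmat : Matrix.diagonal (fun i => Real.sqrt (τ i)) *
        (Matrix.diagonal (fun i => (τ i)⁻¹) * Λm - β • (1 : Matrix (Fin n) (Fin n) ℝ)) * D
          = D * Λm * D - β • (1 : Matrix (Fin n) (Fin n) ℝ) := by
      rw [Matrix.mul_sub, Matrix.sub_mul]
      congr 1
      · rw [← Matrix.mul_assoc, Matrix.diagonal_mul_diagonal]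
        have hfun : Matrix.diagonal (fun i => Real.sqrt (τ i) * (τ i)⁻¹) = D := by
          rw [hD]
          refine congrArg Matrix.diagonal (funext fun i => ?_)
          field_simp
          rw [div_eq_div_iff (hτ0 i) (hst0 i), one_mul]
          exact Real.mul_self_sqrt (hτpos i).le
        rw [hfun]
      · rw [Matrix.mul_smul, Matrix.mul_one, Matrix.smul_mul, hD,
          Matrix.diagonal_mul_diagonal]
        congr 1
        rw [show (fun i => Real.sqrt (τ i) * (Real.sqrt (τ i))⁻¹) = fun _ => (1:ℝ) from
          funext fun i => mul_inv_cancel₀ (hst0 i), Matrix.diagonal_one]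
    rw [hmat]
    set A : Matrix (Fin n) (Fin n) ℝ := D * Λm * D with hA_def
    have hLam : Λm.PosSemidef := lam_posSemidef hsym hproj
    have hDH : Dᴴ = D := by
      rw [hD, Matrix.diagonal_conjTranspose]
      simp
    have hA : A.PosSemidef := by
      rw [hA_def, show D * Λm * D = D * Λm * Dᴴ from by rw [hDH]]
      exact hLam.mul_mul_conjTranspose_same D
    have hAle : ∀ x : Fin n → ℝ, x ⬝ᵥ (A *ᵥ x) ≤ x ⬝ᵥ x := by
      intro x
      have hAx : A *ᵥ x = D *ᵥ (Λm *ᵥ (D *ᵥ x)) := by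
        rw [Matrix.mulVec_mulVec, Matrix.mulVec_mulVec]
      set z : Fin n → ℝ := fun i => (Real.sqrt (τ i))⁻¹ * x i with hz
      have hDx : D *ᵥ x = z := by
        funext i
        rw [hD, Matrix.mulVec_diagonal]
      have hdot : x ⬝ᵥ (A *ᵥ x) = z ⬝ᵥ (Λm *ᵥ z) := by
        rw [hAx, hDx]
        simp only [dotProduct, hD, Matrix.mulVec_diagonal]
        exact Finset.sum_congr rfl fun i _ => by rw [hz]; ring
      rw [hdot, hΛm, quadLam]
      have h1 : ∑ i, ∑ j, (P i j) ^ 2 * (z i * z j) ≥ 0 := schur_nonneg hsym hproj z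
      have h2 : ∑ i, P i i * z i ^ 2 ≤ ∑ i, x i ^ 2 := by
        refine Finset.sum_le_sum fun i _ => ?_
        have : P i i * z i ^ 2 ≤ τ i * z i ^ 2 :=
          mul_le_mul_of_nonneg_right (hτ i) (sq_nonneg _)
        refine this.trans_eq ?_
        rw [hz]
        rw [mul_pow, ← Real.sqrt_inv, Real.sq_sqrt (inv_nonneg.mpr (hτpos i).le),
          mul_inv_cancel_left₀ (hτ0 i)]
      have h3 : x ⬝ᵥ x = ∑ i, x i ^ 2 := by
        simp [dotProduct, sq]
      linarith
    have hA1 : ((1 : Matrix (Fin n) (Fin n) ℝ) - A).PosSemidef := by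
      refine Matrix.PosSemidef.of_dotProduct_mulVec_nonneg ?_ ?_
      · exact (Matrix.isHermitian_one).sub hA.1
      · intro x
        simp only [star_trivial, Matrix.sub_mulVec, Matrix.one_mulVec, dotProduct_sub]
        have := hAle x
        linarith
    have hA2m : (A - A * A).PosSemidef := by
      obtain ⟨S, hSS, hSH⟩ := sqrt_exists hA
      have key : A - A * A = S * ((1 : Matrix (Fin n) (Fin n) ℝ) - A) * S := by
        rw [Matrix.mul_sub, Matrix.mul_one, Matrix.sub_mul, hSS]
        congr 1
        calc A * A = (S * S) * (S * S) := by rw [hSS]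
          _ = S * (S * S) * S := by
              simp only [Matrix.mul_assoc]
          _ = S * A * S := by rw [hSS]
      rw [key, show S * ((1 : Matrix (Fin n) (Fin n) ℝ) - A) * S
          = S * ((1 : Matrix (Fin n) (Fin n) ℝ) - A) * Sᴴ from by
        rw [hSH]]
      exact hA1.mul_mul_conjTranspose_same S
    -- final computation
    have hu : ((A - β • (1 : Matrix (Fin n) (Fin n) ℝ)) *ᵥ y) = A *ᵥ y - β • y := by
      rw [Matrix.sub_mulVec, Matrix.smul_mulVec, Matrix.one_mulVec]
    rw [hu]
    set a : ℝ := y ⬝ᵥ (A *ᵥ y) with ha_def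
    set c : ℝ := y ⬝ᵥ y with hc_def
    set b : ℝ := (A *ᵥ y) ⬝ᵥ (A *ᵥ y) with hb_def
    have ha0 : 0 ≤ a := by simpa using hA.dotProduct_mulVec_nonneg y
    have hac : a ≤ c := hAle y
    have hc0 : 0 ≤ c := by
      rw [hc_def]
      simp only [dotProduct]
      exact Finset.sum_nonneg fun i _ => mul_self_nonneg _
    have hba : b ≤ a := by
      have h0 := hA2m.dotProduct_mulVec_nonneg y
      simp only [star_trivial, Matrix.sub_mulVec, dotProduct_sub] at h0
      have hAA : y ⬝ᵥ ((A * A) *ᵥ y) = b := by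
        rw [← Matrix.mulVec_mulVec, Matrix.dotProduct_mulVec, hb_def]
        congr 1
        rw [← Matrix.mulVec_transpose]
        congr 1
        have h := hA.1
        rw [Matrix.IsHermitian, Matrix.conjTranspose_eq_transpose_of_trivial] at h
        rw [h]
      rw [hAA] at h0
      linarith
    have hexp : ∑ i, ((A *ᵥ y - β • y) i) ^ 2 = b - 2 * β * a + β ^ 2 * c := by
      have h1 : ∑ i, ((A *ᵥ y - β • y) i) ^ 2 = (A *ᵥ y - β • y) ⬝ᵥ (A *ᵥ y - β • y) := by
        simp only [dotProduct, sq]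
      rw [h1]
      simp only [dotProduct_sub, sub_dotProduct, dotProduct_smul,
        smul_dotProduct, smul_eq_mul]
      rw [dotProduct_comm (A *ᵥ y) y]
      rw [← ha_def, ← hc_def, ← hb_def]
      ring
    have hfinal : ∑ i, ((A *ᵥ y - β • y) i) ^ 2 ≤ (1 - β) ^ 2 * c := by
      rw [hexp]
      nlinarith [mul_nonneg (show (0:ℝ) ≤ 1 - 2*β by linarith) (show (0:ℝ) ≤ c - a by linarith)]
    have hcy : c = ∑ i, y i ^ 2 := by
      rw [hc_def]
      simp [dotProduct, sq]
    calc Real.sqrt (∑ i, ((A *ᵥ y - β • y) i) ^ 2)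
        ≤ Real.sqrt ((1 - β) ^ 2 * c) := Real.sqrt_le_sqrt hfinal
      _ = (1 - β) * Real.sqrt (∑ i, y i ^ 2) := by
          rw [Real.sqrt_mul (sq_nonneg _), Real.sqrt_sq (by linarith : (0:ℝ) ≤ 1 - β), hcy]
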